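/- arXiv:2502.10122 — 3 statements merged into one kernel-verified Lean document; each statement's English description precedes it below -/
import Mathlib

section
/- Let D be a positive natural number, let x̄ : [0,1] → ℝ^D be a continuous function, and let β > 0. Define E_concave(q) = -(1/β) · log(∫₀¹ exp(β · ⟪x̄(t), q⟫) dt) and E_convex(q) = (1/2)·‖q‖², and for q ∈ ℝ^D define the Gibbs density p_q(t) = exp(β · ⟪x̄(t), q⟫) / ∫₀¹ exp(β · ⟪x̄(s), q⟫) ds for t ∈ [0,1]. Then for every q ∈ ℝ^D, the function q' ↦ E_convex(q') + E_concave(q) + ⟪∇E_concave(q), q' - q⟫ (the convex part plus the first-order Taylor linearization of the concave part around q, as used in one step of the concave–convex procedure) has a unique global minimizer over ℝ^D, and this minimizer equals the Gibbs expectation ∫₀¹ p_q(t) · x̄(t) dt. -/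
set_option maxHeartbeats 1000000
set_option synthInstance.maxHeartbeats 1000000

open MeasureTheory RealInnerProductSpace

/-- Proposition 1 of the paper (CCCP step): for the continuous Hopfield energy
`E = E_concave + E_convex`, the function obtained by adding the convex part to the
first-order Taylor linearization of the concave part around `q` has a unique global
minimizer, equal to the Gibbs expectation `∫₀¹ p_q(t) • x̄(t) dt`. -/
theorem cccp_update_is_gibbs_expectation
    (D : ℕ) (hD : 0 < D)
    (x : ℝ → EuclideanSpace ℝ (Fin D)) (hx : ContinuousOn x (Set.Icc 0 1))
    (β : ℝ) (hβ : 0 < β)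
    (Econcave : EuclideanSpace ℝ (Fin D) → ℝ)
    (hEconcave : Econcave = fun q =>
      -(1 / β) * Real.log (∫ t in Set.Icc (0 : ℝ) 1, Real.exp (β * ⟪x t, q⟫)))
    (Econvex : EuclideanSpace ℝ (Fin D) → ℝ)
    (hEconvex : Econvex = fun q => (1 / 2) * ‖q‖ ^ 2)
    (p : EuclideanSpace ℝ (Fin D) → ℝ → ℝ)
    (hp : p = fun q t =>
      Real.exp (β * ⟪x t, q⟫) / ∫ s in Set.Icc (0 : ℝ) 1, Real.exp (β * ⟪x s, q⟫))
    (q : EuclideanSpace ℝ (Fin D))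
    (lin : EuclideanSpace ℝ (Fin D) → ℝ)
    (hlin : lin = fun q' => Econvex q' + Econcave q + ⟪gradient Econcave q, q' - q⟫) :
    (∀ q', lin (∫ t in Set.Icc (0 : ℝ) 1, p q t • x t) ≤ lin q') ∧
    (∀ m, (∀ q', lin m ≤ lin q') → m = ∫ t in Set.Icc (0 : ℝ) 1, p q t • x t) := by
  classical
  set μ : Measure ℝ := volume.restrict (Set.Icc (0:ℝ) 1) with hμ
  -- bound on x
  obtain ⟨M, hM⟩ := isCompact_Icc.exists_bound_of_continuousOn hx
  have hM0 : 0 ≤ M := le_trans (norm_nonneg _) (hM 0 ⟨le_refl _, zero_le_one⟩)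
  set R : ℝ := ‖q‖ + 1 with hR
  have hR0 : 0 < R := by positivity
  -- integrand and its derivative
  set f : (EuclideanSpace ℝ (Fin D)) → ℝ → ℝ := fun r t => Real.exp (β * ⟪x t, r⟫) with hf
  set F' : (EuclideanSpace ℝ (Fin D)) → ℝ → (EuclideanSpace ℝ (Fin D)) →L[ℝ] ℝ :=
    fun r t => Real.exp (β * ⟪x t, r⟫) • (β • innerSL ℝ (x t)) with hF'
  have hcont : ∀ r : (EuclideanSpace ℝ (Fin D)), ContinuousOn (fun t => f r t) (Set.Icc (0:ℝ) 1) := by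
    intro r
    exact Real.continuous_exp.comp_continuousOn
      ((continuousOn_const.mul (hx.inner continuousOn_const)))
  have hint : ∀ r : (EuclideanSpace ℝ (Fin D)), IntegrableOn (fun t => f r t) (Set.Icc (0:ℝ) 1) :=
    fun r => (hcont r).integrableOn_Icc
  -- Z and positivity
  set Z : (EuclideanSpace ℝ (Fin D)) → ℝ := fun r => ∫ t in Set.Icc (0:ℝ) 1, f r t with hZ
  have hZpos : 0 < Z q := by
    have hle : ∀ t ∈ Set.Icc (0:ℝ) 1, Real.exp (-(β * M * ‖q‖)) ≤ f q t := by
      intro t ht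
      apply Real.exp_le_exp.2
      have h1 : |⟪x t, q⟫| ≤ M * ‖q‖ := by
        calc |⟪x t, q⟫| ≤ ‖x t‖ * ‖q‖ := abs_real_inner_le_norm _ _
        _ ≤ M * ‖q‖ := by gcongr; exact hM t ht
      nlinarith [abs_le.1 h1]
    have := setIntegral_ge_of_const_le (measurableSet_Icc) (by simp) hle (hint q)
    have h2 : volume.real (Set.Icc (0:ℝ) 1) = 1 := by simp
    rw [h2, one_smul] at this
    exact lt_of_lt_of_le (Real.exp_pos _) this
  have hZne : Z q ≠ 0 := ne_of_gt hZpos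
  -- differentiability of r ↦ f r t everywhere
  have hdiff : ∀ t : ℝ, ∀ r : (EuclideanSpace ℝ (Fin D)), HasFDerivAt (fun r => f r t) (F' r t) r := by
    intro t r
    have h1 : HasFDerivAt (fun r : (EuclideanSpace ℝ (Fin D)) => ⟪x t, r⟫) (innerSL ℝ (x t)) r :=
      (innerSL ℝ (x t)).hasFDerivAt
    have h2 := (h1.const_mul β).exp
    simpa [hf, hF'] using h2
  -- derivative of Z at q
  have hZderiv : HasFDerivAt Z (∫ t in Set.Icc (0:ℝ) 1, F' q t) q := by
    apply hasFDerivAt_integral_of_dominated_of_fderiv_le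
      (bound := fun _ => Real.exp (β * (M * R)) * (β * M)) (s := Metric.ball q 1) (Metric.ball_mem_nhds q one_pos)
    · filter_upwards with r
      exact ((hcont r).aestronglyMeasurable measurableSet_Icc)
    · exact hint q
    · apply ContinuousOn.aestronglyMeasurable _ measurableSet_Icc
      apply ContinuousOn.smul (hcont q)
      exact (((innerSL ℝ).continuous.comp_continuousOn hx).const_smul β)
    · filter_upwards [ae_restrict_mem (measurableSet_Icc (a := (0:ℝ)) (b := 1))] with t ht
      intro r hr
      have hrn : ‖r‖ ≤ R := by
        have : ‖r - q‖ < 1 := by simpa [dist_eq_norm] using hr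
        calc ‖r‖ = ‖r - q + q‖ := by rw [sub_add_cancel]
        _ ≤ ‖r - q‖ + ‖q‖ := norm_add_le _ _
        _ ≤ R := by rw [hR]; linarith
      have hns : ∀ (c : ℝ) (L : EuclideanSpace ℝ (Fin D) →L[ℝ] ℝ), ‖c • L‖ = ‖c‖ * ‖L‖ :=
        fun c L => norm_smul c L
      have hnorm : ‖F' r t‖ = Real.exp (β * ⟪x t, r⟫) * (β * ‖x t‖) := by
        show ‖Real.exp (β * ⟪x t, r⟫) • β • (innerSL ℝ) (x t)‖ = _
        rw [hns, hns, innerSL_apply_norm]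
        simp [Real.abs_exp, abs_of_pos hβ]
      rw [hnorm]
      have h1 : ⟪x t, r⟫ ≤ M * R := by
        calc ⟪x t, r⟫ ≤ ‖x t‖ * ‖r‖ := real_inner_le_norm _ _
        _ ≤ M * R := by
            apply mul_le_mul (hM t ht) hrn (norm_nonneg _) hM0
      have h2 : Real.exp (β * ⟪x t, r⟫) ≤ Real.exp (β * (M * R)) := by
        apply Real.exp_le_exp.2; nlinarith
      have h3 : β * ‖x t‖ ≤ β * M := by nlinarith [hM t ht]
      have h4 : 0 ≤ β * ‖x t‖ := by positivity
      nlinarith [Real.exp_pos (β * ⟪x t, r⟫)]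
    · exact integrableOn_const (by simp) enorm_ne_top
    · filter_upwards with t; intro r _; exact hdiff t r
  -- the Gibbs expectation
  set m : EuclideanSpace ℝ (Fin D) := ∫ t in Set.Icc (0:ℝ) 1, p q t • x t with hm
  have hcontpx : ContinuousOn (fun t => p q t • x t) (Set.Icc (0:ℝ) 1) := by
    rw [hp]
    exact ((hcont q).div_const _).smul hx
  have hintpx : IntegrableOn (fun t => p q t • x t) (Set.Icc (0:ℝ) 1) :=
    hcontpx.integrableOn_Icc
  have hintF' : IntegrableOn (fun t => F' q t) (Set.Icc (0:ℝ) 1) := by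
    apply ContinuousOn.integrableOn_Icc
    exact (hcont q).smul
      (((innerSL ℝ).continuous.comp_continuousOn hx).const_smul β)
  -- derivative of Econcave at q
  set L0 : (EuclideanSpace ℝ (Fin D)) →L[ℝ] ℝ := ∫ t in Set.Icc (0:ℝ) 1, F' q t with hL0
  have hlog : HasFDerivAt (fun r => Real.log (Z r)) ((Z q)⁻¹ • L0) q :=
    (Real.hasDerivAt_log hZne).comp_hasFDerivAt q hZderiv
  have hEderiv : HasFDerivAt Econcave ((-(1/β)) • ((Z q)⁻¹ • L0)) q := by
    rw [hEconcave]
    exact hlog.const_mul (-(1/β))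
  -- the derivative equals the dual of -m
  have hdual : ((-(1/β)) • ((Z q)⁻¹ • L0)) = (InnerProductSpace.toDual ℝ _) (-m) := by
    apply ContinuousLinearMap.ext
    intro v
    have hL0v : L0 v = ∫ t in Set.Icc (0:ℝ) 1, (F' q t) v := by
      rw [hL0, ContinuousLinearMap.integral_apply hintF']
    have hFv : ∀ t, (F' q t) v = f q t * (β * ⟪x t, v⟫) := by
      intro t
      rw [hF']
      simp [hf, innerSL_apply_apply, smul_smul]
      ring
    have hvm : (⟪v, m⟫ : ℝ) = ∫ t in Set.Icc (0:ℝ) 1, p q t * ⟪x t, v⟫ := by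
      rw [hm, ← integral_inner hintpx v]
      apply setIntegral_congr_fun measurableSet_Icc
      intro t _
      show (⟪v, p q t • x t⟫ : ℝ) = p q t * ⟪x t, v⟫
      rw [real_inner_smul_right, real_inner_comm]
    have hmv : ⟪(-m : EuclideanSpace ℝ (Fin D)), v⟫ =
        -∫ t in Set.Icc (0:ℝ) 1, p q t * ⟪x t, v⟫ := by
      rw [inner_neg_left, real_inner_comm, hvm]
    have hIv : L0 v = β * ∫ t in Set.Icc (0:ℝ) 1, f q t * ⟪x t, v⟫ := by
      rw [hL0v, ← integral_const_mul]
      apply setIntegral_congr_fun measurableSet_Icc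
      intro t _
      show (F' q t) v = β * (f q t * ⟪x t, v⟫)
      rw [hFv t]; ring
    have hpint : ∫ t in Set.Icc (0:ℝ) 1, p q t * ⟪x t, v⟫ =
        (Z q)⁻¹ * ∫ t in Set.Icc (0:ℝ) 1, f q t * ⟪x t, v⟫ := by
      rw [← integral_const_mul]
      apply setIntegral_congr_fun measurableSet_Icc
      intro t _
      show p q t * ⟪x t, v⟫ = (Z q)⁻¹ * (f q t * ⟪x t, v⟫)
      have hpt : p q t = f q t / Z q := by rw [hp]
      rw [hpt]
      field_simp
    rw [ContinuousLinearMap.smul_apply, ContinuousLinearMap.smul_apply,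
      InnerProductSpace.toDual_apply_apply, hmv, hpint, hIv]
    have hβne : β ≠ 0 := ne_of_gt hβ
    field_simp
    linear_combination (-(β * β⁻¹) * ∫ (t : ℝ) in Set.Icc 0 1, f q t * ⟪x t, v⟫) * mul_inv_cancel₀ hZne + (-∫ (t : ℝ) in Set.Icc 0 1, f q t * ⟪x t, v⟫) * mul_inv_cancel₀ hβne
  have hgrad : HasGradientAt Econcave (-m) q := by
    rw [hasGradientAt_iff_hasFDerivAt, ← hdual]
    exact hEderiv
  have hgradeq : gradient Econcave q = -m := hgrad.gradient
  -- quadratic identity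
  have hkey : ∀ q', lin q' = lin m + (1/2) * ‖q' - m‖^2 := by
    intro q'
    rw [hlin, hEconvex, hgradeq]
    simp only
    have e0 : ‖q' - m‖^2 = ‖q'‖^2 - 2*⟪q',m⟫ + ‖m‖^2 := by
      rw [norm_sub_sq_real]
    have e1 : ⟪(-m : EuclideanSpace ℝ (Fin D)), q' - q⟫ = -⟪q',m⟫ + ⟪m, q⟫ := by
      rw [inner_neg_left, inner_sub_right]
      rw [real_inner_comm m q']
      ring
    have e2 : ⟪(-m : EuclideanSpace ℝ (Fin D)), m - q⟫ = -‖m‖^2 + ⟪m, q⟫ := by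
      rw [inner_neg_left, inner_sub_right, real_inner_self_eq_norm_sq]
      ring
    rw [e1, e2, e0]
    ring
  constructor
  · intro q'
    rw [hkey q']
    nlinarith [sq_nonneg ‖q' - m‖]
  · intro m' hm'
    have h1 : lin m' ≤ lin m := hm' m
    have h2 : lin m' = lin m + (1/2) * ‖m' - m‖^2 := hkey m'
    have h3 : ‖m' - m‖^2 ≤ 0 := by nlinarith
    have h4 : ‖m' - m‖ = 0 := by nlinarith [sq_nonneg ‖m' - m‖, norm_nonneg (m' - m)]
    have h5 : m' - m = 0 := norm_eq_zero.1 h4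
    exact sub_eq_zero.1 h5
end

section
/- Let D be a positive natural number, let x̄ : [0,1] → ℝ^D be a continuous function, and let β > 0. Define E_concave(q) = -(1/β) · log(∫₀¹ exp(β · ⟪x̄(t), q⟫) dt) and, for q ∈ ℝ^D, the Gibbs density p_q(t) = exp(β · ⟪x̄(t), q⟫) / ∫₀¹ exp(β · ⟪x̄(s), q⟫) ds. Then E_concave is differentiable on ℝ^D and its gradient is ∇E_concave(q) = -∫₀¹ p_q(t) · x̄(t) dt, the negative of the Gibbs expectation of x̄. -/
open MeasureTheory RealInnerProductSpace

set_option maxHeartbeats 1000000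
set_option synthInstance.maxHeartbeats 400000

/-- The concave part of the continuous Hopfield energy is differentiable, with gradient
equal to the negative Gibbs expectation: `∇E_concave(q) = -∫₀¹ p_q(t) • x̄(t) dt`. -/
theorem gradient_Econcave_eq_neg_gibbs_expectation
    (D : ℕ) (hD : 0 < D)
    (x : ℝ → EuclideanSpace ℝ (Fin D)) (hx : ContinuousOn x (Set.Icc 0 1))
    (β : ℝ) (hβ : 0 < β)
    (Econcave : EuclideanSpace ℝ (Fin D) → ℝ)
    (hEconcave : Econcave = fun q =>
      -(1 / β) * Real.log (∫ t in Set.Icc (0 : ℝ) 1, Real.exp (β * ⟪x t, q⟫)))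
    (p : EuclideanSpace ℝ (Fin D) → ℝ → ℝ)
    (hp : p = fun q t =>
      Real.exp (β * ⟪x t, q⟫) / ∫ s in Set.Icc (0 : ℝ) 1, Real.exp (β * ⟪x s, q⟫)) :
    Differentiable ℝ Econcave ∧
    ∀ q, gradient Econcave q = -∫ t in Set.Icc (0 : ℝ) 1, p q t • x t := by
  subst hEconcave hp
  obtain ⟨M, hM⟩ := isCompact_Icc.exists_bound_of_continuousOn hx
  have hM0 : 0 ≤ M := le_trans (norm_nonneg _) (hM 0 (by norm_num))
  have hinner : ∀ q, ContinuousOn (fun t => β * ⟪x t, q⟫) (Set.Icc (0:ℝ) 1) :=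
    fun q => continuousOn_const.mul (hx.inner continuousOn_const)
  have hcont : ∀ q, ContinuousOn (fun t => Real.exp (β * ⟪x t, q⟫)) (Set.Icc (0:ℝ) 1) :=
    fun q => Real.continuous_exp.comp_continuousOn (hinner q)
  have hint : ∀ q, IntegrableOn (fun t => Real.exp (β * ⟪x t, q⟫)) (Set.Icc (0:ℝ) 1) :=
    fun q => (hcont q).integrableOn_compact isCompact_Icc
  have hFpos : ∀ q, 0 < ∫ t in Set.Icc (0:ℝ) 1, Real.exp (β * ⟪x t, q⟫) := by
    intro q
    have hc : ∀ t ∈ Set.Icc (0:ℝ) 1,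
        Real.exp (-(β * (M * ‖q‖))) ≤ Real.exp (β * ⟪x t, q⟫) := by
      intro t ht
      apply Real.exp_le_exp.2
      have h1 : |⟪x t, q⟫| ≤ M * ‖q‖ :=
        le_trans (abs_real_inner_le_norm _ _)
          (mul_le_mul_of_nonneg_right (hM t ht) (norm_nonneg q))
      nlinarith [neg_abs_le ⟪x t, q⟫, hβ.le]
    have h2 := setIntegral_ge_of_const_le_real measurableSet_Icc measure_Icc_lt_top.ne hc (hint q)
    calc (0:ℝ) < Real.exp (-(β * (M * ‖q‖))) * (volume (Set.Icc (0:ℝ) 1)).toReal := by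
          rw [Real.volume_Icc]; norm_num; positivity
      _ ≤ _ := h2
  have hderiv : ∀ (t : ℝ) (q : EuclideanSpace ℝ (Fin D)),
      HasFDerivAt (fun q => Real.exp (β * ⟪x t, q⟫))
        (Real.exp (β * ⟪x t, q⟫) • (β • innerSL ℝ (x t))) q := by
    intro t q
    exact (((innerSL ℝ (x t)).hasFDerivAt).const_mul β).exp
  -- continuity of the derivative in t
  have hcont' : ∀ q, ContinuousOn
      (fun t => Real.exp (β * ⟪x t, q⟫) • (β • innerSL ℝ (x t))) (Set.Icc (0:ℝ) 1) := by
    intro q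
    exact (hcont q).smul (((innerSL ℝ).continuous.comp_continuousOn hx).const_smul β)
  have key : ∀ q₀ : EuclideanSpace ℝ (Fin D),
      HasGradientAt (fun q => -(1 / β) * Real.log (∫ t in Set.Icc (0 : ℝ) 1,
          Real.exp (β * ⟪x t, q⟫)))
        (-∫ t in Set.Icc (0 : ℝ) 1,
          (Real.exp (β * ⟪x t, q₀⟫) / ∫ s in Set.Icc (0 : ℝ) 1, Real.exp (β * ⟪x s, q₀⟫)) • x t)
        q₀ := by
    intro q₀
    set C : ℝ := Real.exp (β * (M * (‖q₀‖ + 1))) * (β * M) with hC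
    have hbound : ∀ t ∈ Set.Icc (0:ℝ) 1, ∀ q ∈ Metric.ball q₀ 1,
        ‖Real.exp (β * ⟪x t, q⟫) • (β • innerSL ℝ (x t))‖ ≤ C := by
      intro t ht q hq

      have hq' : ‖q‖ ≤ ‖q₀‖ + 1 := by
        have := Metric.mem_ball.1 hq
        rw [dist_eq_norm] at this
        calc ‖q‖ = ‖q₀ + (q - q₀)‖ := by rw [show q₀ + (q - q₀) = q from by abel]
          _ ≤ ‖q₀‖ + ‖q - q₀‖ := norm_add_le _ _
          _ ≤ ‖q₀‖ + 1 := by linarith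
      have h1 : ⟪x t, q⟫ ≤ M * (‖q₀‖ + 1) := by
        calc ⟪x t, q⟫ ≤ ‖x t‖ * ‖q‖ := real_inner_le_norm _ _
          _ ≤ M * (‖q₀‖ + 1) := by
              apply mul_le_mul (hM t ht) hq' (norm_nonneg q) hM0
      have h2 : Real.exp (β * ⟪x t, q⟫) ≤ Real.exp (β * (M * (‖q₀‖ + 1))) :=
        Real.exp_le_exp.2 (mul_le_mul_of_nonneg_left h1 hβ.le)
      have h3 : β * ‖x t‖ ≤ β * M := mul_le_mul_of_nonneg_left (hM t ht) hβ.le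
      calc ‖Real.exp (β * ⟪x t, q⟫) • (β • innerSL ℝ (x t))‖
          ≤ ‖Real.exp (β * ⟪x t, q⟫)‖ * ‖β • innerSL ℝ (x t)‖ := ContinuousLinearMap.opNorm_smul_le _ _
        _ ≤ ‖Real.exp (β * ⟪x t, q⟫)‖ * (‖β‖ * ‖innerSL ℝ (x t)‖) := by
            gcongr
            exact ContinuousLinearMap.opNorm_smul_le _ _
        _ = Real.exp (β * ⟪x t, q⟫) * (β * ‖x t‖) := by
            rw [innerSL_apply_norm, Real.norm_eq_abs, Real.abs_exp,
              Real.norm_eq_abs, abs_of_pos hβ]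
        _ ≤ Real.exp (β * (M * (‖q₀‖ + 1))) * (β * M) := by
            apply mul_le_mul h2 h3 (by positivity) (Real.exp_pos _).le
        _ = C := rfl
    have HF : HasFDerivAt
        (fun q => ∫ t in Set.Icc (0:ℝ) 1, Real.exp (β * ⟪x t, q⟫))
        (∫ t in Set.Icc (0:ℝ) 1, Real.exp (β * ⟪x t, q₀⟫) • (β • innerSL ℝ (x t))) q₀ := by
      apply hasFDerivAt_integral_of_dominated_of_fderiv_le
        (𝕜 := ℝ) (μ := volume.restrict (Set.Icc (0:ℝ) 1))
        (F := fun q t => Real.exp (β * ⟪x t, q⟫))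
        (F' := fun q t => Real.exp (β * ⟪x t, q⟫) • (β • innerSL ℝ (x t)))
        (bound := fun _ => C) (Metric.ball_mem_nhds q₀ one_pos)
      · exact Filter.Eventually.of_forall fun q =>
          (hcont q).aestronglyMeasurable measurableSet_Icc
      · exact hint q₀
      · exact (hcont' q₀).aestronglyMeasurable measurableSet_Icc
      · exact ae_restrict_of_forall_mem measurableSet_Icc hbound
      · exact integrable_const C
      · exact Filter.Eventually.of_forall fun t q _ => hderiv t q
    set Fq : ℝ := ∫ t in Set.Icc (0:ℝ) 1, Real.exp (β * ⟪x t, q₀⟫) with hFq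
    have HL := HF.log (hFpos q₀).ne'
    have Hc := HL.const_mul (-(1 / β))
    rw [hasGradientAt_iff_hasFDerivAt]
    have hInt1 : IntegrableOn (fun t => (Real.exp (β * ⟪x t, q₀⟫) / Fq) • x t)
        (Set.Icc (0:ℝ) 1) :=
      (((hcont q₀).div_const _).smul hx).integrableOn_compact isCompact_Icc
    have hIntD : IntegrableOn (fun t => Real.exp (β * ⟪x t, q₀⟫) • (β • innerSL ℝ (x t)))
        (Set.Icc (0:ℝ) 1) := (hcont' q₀).integrableOn_compact isCompact_Icc
    have hdual : (InnerProductSpace.toDual ℝ (EuclideanSpace ℝ (Fin D)))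
        (-∫ t in Set.Icc (0 : ℝ) 1, (Real.exp (β * ⟪x t, q₀⟫) / Fq) • x t)
        = (-(1 / β)) • (Fq⁻¹ •
            ∫ t in Set.Icc (0:ℝ) 1, Real.exp (β * ⟪x t, q₀⟫) • (β • innerSL ℝ (x t))) := by
      apply ContinuousLinearMap.ext
      intro v
      have lhs_eq : ∀ t : ℝ, ⟪v, (Real.exp (β * ⟪x t, q₀⟫) / Fq) • x t⟫
          = Fq⁻¹ * (Real.exp (β * ⟪x t, q₀⟫) * ⟪x t, v⟫) := by
        intro t
        rw [real_inner_smul_right, real_inner_comm v (x t)]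
        ring
      have rhs_eq : ∀ t : ℝ, (Real.exp (β * ⟪x t, q₀⟫) • (β • innerSL ℝ (x t))) v
          = β * (Real.exp (β * ⟪x t, q₀⟫) * ⟪x t, v⟫) := by
        intro t
        rw [ContinuousLinearMap.smul_apply, ContinuousLinearMap.smul_apply, innerSL_apply_apply]
        simp only [smul_eq_mul]
        ring
      have L : (InnerProductSpace.toDual ℝ (EuclideanSpace ℝ (Fin D)))
          (-∫ t in Set.Icc (0 : ℝ) 1, (Real.exp (β * ⟪x t, q₀⟫) / Fq) • x t) v
          = -(Fq⁻¹ * ∫ t in Set.Icc (0:ℝ) 1, Real.exp (β * ⟪x t, q₀⟫) * ⟪x t, v⟫) := by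
        rw [InnerProductSpace.toDual_apply_apply, inner_neg_left,
          real_inner_comm v (∫ t in Set.Icc (0 : ℝ) 1,
            (Real.exp (β * ⟪x t, q₀⟫) / Fq) • x t),
          ← integral_inner hInt1 v]
        simp_rw [lhs_eq]
        rw [integral_const_mul]
      have R : ((-(1 / β)) • (Fq⁻¹ •
            ∫ t in Set.Icc (0:ℝ) 1, Real.exp (β * ⟪x t, q₀⟫) • (β • innerSL ℝ (x t)))) v
          = -(1 / β) * (Fq⁻¹ *
            (β * ∫ t in Set.Icc (0:ℝ) 1, Real.exp (β * ⟪x t, q₀⟫) * ⟪x t, v⟫)) := by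
        rw [ContinuousLinearMap.smul_apply, ContinuousLinearMap.smul_apply,
          ContinuousLinearMap.integral_apply hIntD]
        simp_rw [rhs_eq]
        rw [integral_const_mul]
        simp [smul_eq_mul]
      rw [L, R]
      have hβ' : β ≠ 0 := hβ.ne'
      field_simp
    rw [hdual]
    exact Hc
  constructor
  · exact fun q => ((key q).hasFDerivAt).differentiableAt
  · exact fun q => (key q).gradient
end

section
/- Let D be a positive natural number, let x̄ : [0,1] → ℝ^D be a continuous function, and let β > 0. Define the continuous Hopfield energy E(q) = -(1/β) · log(∫₀¹ exp(β · ⟪x̄(t), q⟫) dt) + (1/2)·‖q‖², and the Gibbs density p_q(t) = exp(β · ⟪x̄(t), q⟫) / ∫₀¹ exp(β · ⟪x̄(s), q⟫) ds. Then E is differentiable on ℝ^D, and for every q ∈ ℝ^D one has ∇E(q) = 0 if and only if q = ∫₀¹ p_q(t) · x̄(t) dt; that is, the stationary points of the energy are exactly the fixed points of the Gibbs expectation update rule. -/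
open MeasureTheory RealInnerProductSpace

set_option synthInstance.maxHeartbeats 1000000
set_option maxHeartbeats 1000000

section Aux

variable {D : ℕ}

local notation "H" => EuclideanSpace ℝ (Fin D)

/-- Gradient of the partition function. -/
lemma hasFDerivAt_partition (x : ℝ → EuclideanSpace ℝ (Fin D))
    (hx : ContinuousOn x (Set.Icc 0 1)) {β : ℝ} (hβ : 0 < β)
    (q : EuclideanSpace ℝ (Fin D)) :
    HasFDerivAt (fun y : EuclideanSpace ℝ (Fin D) =>
        ∫ t in Set.Icc (0 : ℝ) 1, Real.exp (β * ⟪x t, y⟫))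
      (∫ t in Set.Icc (0 : ℝ) 1,
        (β * Real.exp (β * ⟪x t, q⟫)) • (InnerProductSpace.toDual ℝ H (x t) : H →L[ℝ] ℝ)) q := by
  obtain ⟨C, hC⟩ := isCompact_Icc.exists_bound_of_continuousOn hx
  set M : ℝ := max C 0 with hMdef
  have hM0 : (0:ℝ) ≤ M := le_max_right _ _
  have hM : ∀ t ∈ Set.Icc (0:ℝ) 1, ‖x t‖ ≤ M := fun t ht => (hC t ht).trans (le_max_left _ _)
  have contExp : ∀ y : H, ContinuousOn (fun t => Real.exp (β * ⟪x t, y⟫)) (Set.Icc (0:ℝ) 1) :=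
    fun y => Real.continuous_exp.comp_continuousOn
      (continuousOn_const.mul (hx.inner continuousOn_const))
  refine hasFDerivAt_integral_of_dominated_of_fderiv_le (s := Metric.ball q 1)
    (F' := fun y t => (β * Real.exp (β * ⟪x t, y⟫)) • (InnerProductSpace.toDual ℝ H (x t) : H →L[ℝ] ℝ))
    (bound := fun _ => β * Real.exp (β * (M * (‖q‖ + 1))) * M) (Metric.ball_mem_nhds q one_pos) ?_ ?_ ?_ ?_ ?_ ?_
  · exact Filter.Eventually.of_forall fun y =>
      ((contExp y).aestronglyMeasurable measurableSet_Icc)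
  · exact (contExp q).integrableOn_Icc
  · refine ContinuousOn.aestronglyMeasurable ?_ measurableSet_Icc
    exact (continuousOn_const.mul (contExp q)).smul
      ((InnerProductSpace.toDual ℝ H).continuous.comp_continuousOn hx)
  · filter_upwards [ae_restrict_mem measurableSet_Icc] with t ht
    intro y hy
    have hy' : ‖y‖ ≤ ‖q‖ + 1 := by
      have := mem_ball_iff_norm.mp hy
      have h2 : ‖y‖ - ‖q‖ ≤ ‖y - q‖ := norm_sub_norm_le _ _
      linarith
    have hinner : ⟪x t, y⟫ ≤ M * (‖q‖ + 1) := by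
      calc ⟪x t, y⟫ ≤ ‖x t‖ * ‖y‖ := real_inner_le_norm _ _
        _ ≤ M * (‖q‖ + 1) := by
            apply mul_le_mul (hM t ht) hy' (norm_nonneg _) hM0
    have hns := norm_smul (β * Real.exp (β * ⟪x t, y⟫)) ((InnerProductSpace.toDual ℝ H) (x t))
    rw [hns, LinearIsometryEquiv.norm_map, Real.norm_eq_abs, abs_of_pos (by positivity)]
    have hee : Real.exp (β * ⟪x t, y⟫) ≤ Real.exp (β * (M * (‖q‖ + 1))) := by
      apply Real.exp_le_exp.2
      exact mul_le_mul_of_nonneg_left hinner hβ.le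
    exact mul_le_mul (mul_le_mul_of_nonneg_left hee hβ.le) (hM t ht)
      (norm_nonneg _) (by positivity)
  · exact integrableOn_const (by simp [Real.volume_Icc])
  · filter_upwards [ae_restrict_mem measurableSet_Icc] with t _
    intro y _
    have h1 : HasFDerivAt (fun z : H => ⟪x t, z⟫)
        (InnerProductSpace.toDual ℝ H (x t) : H →L[ℝ] ℝ) y := by
      have := (InnerProductSpace.toDual ℝ H (x t) : H →L[ℝ] ℝ).hasFDerivAt (x := y)
      convert this using 2
      rw [InnerProductSpace.toDual_apply_apply]
    have h2 : HasFDerivAt (fun z : H => β * ⟪x t, z⟫)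
        (β • (InnerProductSpace.toDual ℝ H (x t) : H →L[ℝ] ℝ)) y := h1.const_mul β
    have h3 := (Real.hasDerivAt_exp (β * ⟪x t, y⟫)).comp_hasFDerivAt y h2
    convert h3 using 1
    · rfl
    · rfl
    rw [smul_smul, mul_comm]

end Aux

/-- The continuous Hopfield energy `E` is differentiable, and its stationary points are
exactly the fixed points of the Gibbs expectation update rule
`q ↦ ∫₀¹ p_q(t) • x̄(t) dt`. -/
theorem energy_stationary_iff_gibbs_fixed_point
    (D : ℕ) (hD : 0 < D)
    (x : ℝ → EuclideanSpace ℝ (Fin D)) (hx : ContinuousOn x (Set.Icc 0 1))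
    (β : ℝ) (hβ : 0 < β)
    (E : EuclideanSpace ℝ (Fin D) → ℝ)
    (hE : E = fun q =>
      -(1 / β) * Real.log (∫ t in Set.Icc (0 : ℝ) 1, Real.exp (β * ⟪x t, q⟫)) +
        (1 / 2) * ‖q‖ ^ 2)
    (p : EuclideanSpace ℝ (Fin D) → ℝ → ℝ)
    (hp : p = fun q t =>
      Real.exp (β * ⟪x t, q⟫) / ∫ s in Set.Icc (0 : ℝ) 1, Real.exp (β * ⟪x s, q⟫)) :
    Differentiable ℝ E ∧
    ∀ q, gradient E q = 0 ↔ q = ∫ t in Set.Icc (0 : ℝ) 1, p q t • x t := by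
  subst hE hp
  obtain ⟨C, hC⟩ := isCompact_Icc.exists_bound_of_continuousOn hx
  set M : ℝ := max C 0 with hMdef
  have hM0 : (0:ℝ) ≤ M := le_max_right _ _
  have hM : ∀ t ∈ Set.Icc (0:ℝ) 1, ‖x t‖ ≤ M := fun t ht => (hC t ht).trans (le_max_left _ _)
  set Z : EuclideanSpace ℝ (Fin D) → ℝ :=
    fun q => ∫ t in Set.Icc (0 : ℝ) 1, Real.exp (β * ⟪x t, q⟫) with hZ
  set W : EuclideanSpace ℝ (Fin D) → EuclideanSpace ℝ (Fin D) :=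
    fun q => ∫ t in Set.Icc (0 : ℝ) 1, Real.exp (β * ⟪x t, q⟫) • x t with hW
  have contExp : ∀ y, ContinuousOn (fun t => Real.exp (β * ⟪x t, y⟫)) (Set.Icc (0:ℝ) 1) :=
    fun y => Real.continuous_exp.comp_continuousOn
      (continuousOn_const.mul (hx.inner continuousOn_const))
  have hZpos : ∀ q, 0 < Z q := by
    intro q
    have hle : ∀ t ∈ Set.Icc (0:ℝ) 1,
        Real.exp (-(β * (M * ‖q‖))) ≤ Real.exp (β * ⟪x t, q⟫) := by
      intro t ht
      apply Real.exp_le_exp.2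
      have h1 : |⟪x t, q⟫| ≤ ‖x t‖ * ‖q‖ := abs_real_inner_le_norm _ _
      have h2 : ‖x t‖ * ‖q‖ ≤ M * ‖q‖ :=
        mul_le_mul_of_nonneg_right (hM t ht) (norm_nonneg _)
      have h3 : -(M * ‖q‖) ≤ ⟪x t, q⟫ := by
        have := neg_abs_le (⟪x t, q⟫ : ℝ)
        linarith
      nlinarith
    have h0 : (0:ℝ) < Real.exp (-(β * (M * ‖q‖))) := Real.exp_pos _
    have hint : (∫ t in Set.Icc (0:ℝ) 1, Real.exp (-(β * (M * ‖q‖))))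
        ≤ Z q := by
      apply setIntegral_mono_on (integrableOn_const (by simp [Real.volume_Icc]))
        ((contExp q).integrableOn_Icc) measurableSet_Icc hle
    have : (∫ _ in Set.Icc (0:ℝ) 1, Real.exp (-(β * (M * ‖q‖))))
        = Real.exp (-(β * (M * ‖q‖))) := by
      simp [Real.volume_Icc]
    rw [this] at hint
    linarith
  have hWβint : ∀ q, IntegrableOn
      (fun t => (β * Real.exp (β * ⟪x t, q⟫)) • x t) (Set.Icc (0:ℝ) 1) := by
    intro q
    exact ((continuousOn_const.mul (contExp q)).smul hx).integrableOn_Icc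
  have hZgrad : ∀ q, HasGradientAt Z (β • W q) q := by
    intro q
    rw [hasGradientAt_iff_hasFDerivAt]
    have h := hasFDerivAt_partition x hx hβ q
    convert h using 1
    · rfl
    · rfl
    set L := (InnerProductSpace.toDual ℝ (EuclideanSpace ℝ (Fin D))).toContinuousLinearEquiv.toContinuousLinearMap with hL
    have hcomm := L.integral_comp_comm (hWβint q)
    have hLe : ∀ v : EuclideanSpace ℝ (Fin D), L v = InnerProductSpace.toDual ℝ _ v :=
      fun v => rfl
    have hWeq : (β • W q) = ∫ t in Set.Icc (0:ℝ) 1, (β * Real.exp (β * ⟪x t, q⟫)) • x t := by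
      rw [hW]
      rw [← integral_smul]
      congr 1
      funext t
      rw [smul_smul]
    rw [hWeq, ← hLe, ← hcomm]
    congr 1
    funext t
    rw [← hLe]
    simp
  have hEgrad : ∀ q, HasGradientAt
      (fun q => -(1 / β) * Real.log (Z q) + (1 / 2) * ‖q‖ ^ 2)
      (q - (Z q)⁻¹ • W q) q := by
    intro q
    rw [hasGradientAt_iff_hasFDerivAt]
    have hZf : HasFDerivAt Z (InnerProductSpace.toDual ℝ _ (β • W q)) q := hZgrad q
    have hlog := (Real.hasDerivAt_log (hZpos q).ne').comp_hasFDerivAt q hZf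
    have hpart1 := hlog.const_mul (-(1/β))
    have hpart2 := ((hasStrictFDerivAt_norm_sq q).hasFDerivAt).const_mul ((1:ℝ)/2)
    have hsum := hpart1.add hpart2
    convert hsum using 1
    · rfl
    · rfl
    · rfl
    ext y
    have hβ' : β ≠ 0 := hβ.ne'
    have hZ' : Z q ≠ 0 := (hZpos q).ne'
    simp only [ContinuousLinearMap.add_apply, ContinuousLinearMap.smul_apply,
      InnerProductSpace.toDual_apply_apply, innerSL_apply_apply, smul_eq_mul,
      inner_sub_left, inner_smul_left, ContinuousLinearMap.coe_smul',
      Pi.smul_apply, RCLike.star_def, starRingEnd_apply, star_trivial]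
    field_simp
    ring
  have key : ∀ q, gradient
      (fun q => -(1 / β) * Real.log (Z q) + (1 / 2) * ‖q‖ ^ 2) q
      = q - ∫ t in Set.Icc (0:ℝ) 1,
          (Real.exp (β * ⟪x t, q⟫) / Z q) • x t := by
    intro q
    rw [(hEgrad q).gradient]
    congr 1
    rw [hW, ← integral_smul]
    congr 1
    funext t
    rw [smul_smul, div_eq_mul_inv, mul_comm]
  constructor
  · intro q
    exact (hEgrad q).differentiableAt
  · intro q
    rw [key q, sub_eq_zero]
end
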